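/- For every δ > 0 and all x, y, y₀ ∈ ℝ, the Gaussian satisfies e^{−(x−y)²/δ} = Σ_{n=0}^{∞} (1/n!) ((y−y₀)/√δ)^n h_n((x−y₀)/√δ), the series on the right being absolutely convergent. -/

import Mathlib

noncomputable def Fc : ℂ → ℂ := fun z => Complex.exp (-z ^ 2)

lemma Fc_diff : Differentiable ℂ Fc :=
  Complex.differentiable_exp.comp (differentiable_pow 2).neg

lemma Fc_contDiff : ContDiff ℂ ⊤ Fc := Fc_diff.contDiff

lemma Fc_iter_diff (n : ℕ) : Differentiable ℂ (iteratedDeriv n Fc) :=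
  Fc_contDiff.differentiable_iteratedDeriv n (by exact_mod_cast WithTop.coe_lt_top (n : ℕ∞))

lemma iteratedDeriv_re (n : ℕ) (x : ℝ) :
    iteratedDeriv n (fun t : ℝ => Real.exp (-t ^ 2)) x = (iteratedDeriv n Fc x).re := by
  induction n generalizing x with
  | zero =>
    simp only [iteratedDeriv_zero, Fc]
    rw [show (-(x:ℂ)^2) = ((-x^2 : ℝ) : ℂ) by push_cast; ring, ← Complex.ofReal_exp,
      Complex.ofReal_re]
  | succ n ih =>
    rw [iteratedDeriv_succ, iteratedDeriv_succ]
    have hfun : iteratedDeriv n (fun t : ℝ => Real.exp (-t ^ 2)) =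
        fun t : ℝ => (iteratedDeriv n Fc t).re := funext ih
    rw [hfun]
    have hd : HasDerivAt (iteratedDeriv n Fc) (deriv (iteratedDeriv n Fc) (x : ℂ)) (x : ℂ) :=
      (Fc_iter_diff n (x : ℂ)).hasDerivAt
    exact hd.real_of_complex.deriv

/-- The Hermite functions `h_n(x) = (-1)^n (d/dx)^n e^{-x^2}`. -/
noncomputable def hermiteF (n : ℕ) (x : ℝ) : ℝ :=
  (-1 : ℝ) ^ n * iteratedDeriv n (fun t => Real.exp (-t ^ 2)) x

lemma key (u t : ℝ) :
    (Summable fun n : ℕ => |(1 / (n.factorial : ℝ)) * t ^ n * hermiteF n u|) ∧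
    HasSum (fun n : ℕ => (1 / (n.factorial : ℝ)) * t ^ n * hermiteF n u)
      (Real.exp (-(u - t) ^ 2)) := by
  have hball := Fc_diff.hasFPowerSeriesOnBall (u : ℂ) (R := 1) one_pos
  have hmem : (-(t:ℂ)) ∈ Metric.eball (0 : ℂ) ⊤ := by simp [Metric.mem_eball]
  have hsum := hball.hasSum_iteratedFDeriv hmem
  set a : ℕ → ℂ := fun n =>
    ((n.factorial : ℂ))⁻¹ • iteratedFDeriv ℂ n Fc (u:ℂ) (fun _ => -(t:ℂ)) with ha
  have hterm : ∀ n, (a n).re = (1 / (n.factorial : ℝ)) * t ^ n * hermiteF n u := by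
    intro n
    have h1 : iteratedFDeriv ℂ n Fc (u:ℂ) (fun _ => -(t:ℂ)) = (-(t:ℂ))^n • iteratedDeriv n Fc u := by
      rw [iteratedFDeriv_apply_eq_iteratedDeriv_mul_prod]; simp
    rw [ha]; simp only [h1, smul_eq_mul]
    have h2 : ((n.factorial:ℂ))⁻¹ * ((-(t:ℂ))^n * iteratedDeriv n Fc u)
        = ((((n.factorial:ℝ))⁻¹ * (-t)^n : ℝ) : ℂ) * iteratedDeriv n Fc u := by push_cast; ring
    rw [h2, Complex.re_ofReal_mul, hermiteF, ← iteratedDeriv_re, neg_pow]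
    field_simp
  have hval : (Fc ((u:ℂ) + -(t:ℂ))).re = Real.exp (-(u - t) ^ 2) := by
    have : ((u:ℂ) + -(t:ℂ)) = ((u - t : ℝ) : ℂ) := by push_cast; ring
    rw [this, Fc]
    rw [show (-((u - t : ℝ):ℂ)^2) = ((-(u-t)^2 : ℝ) : ℂ) by push_cast; ring,
      ← Complex.ofReal_exp, Complex.ofReal_re]
  have hre : HasSum (fun n => (a n).re) (Real.exp (-(u - t) ^ 2)) := by
    have := hsum.mapL Complex.reCLM
    simpa [hval] using this
  have hre' : HasSum (fun n : ℕ => (1 / (n.factorial : ℝ)) * t ^ n * hermiteF n u)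
      (Real.exp (-(u - t) ^ 2)) := by
    simpa [hterm] using hre
  refine ⟨?_, hre'⟩
  -- absolute summability
  have hap : ∀ n, a n = cauchyPowerSeries Fc (u:ℂ) 1 n (fun _ => -(t:ℂ)) := by
    intro n
    simp only [ha]
    rw [← hball.factorial_smul (-(t:ℂ)) n, ← Nat.cast_smul_eq_nsmul ℂ, smul_smul,
      inv_mul_cancel₀ (by exact_mod_cast n.factorial_ne_zero), one_smul]
    norm_num
  have hmem' : (-(t:ℂ)) ∈ Metric.eball (0 : ℂ) (cauchyPowerSeries Fc (u:ℂ) 1).radius := by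
    have : (cauchyPowerSeries Fc (u:ℂ) 1).radius = ⊤ := le_antisymm le_top hball.r_le
    rw [this]; simp [Metric.mem_eball]
  have hnorm : Summable fun n => ‖a n‖ := by
    simpa [hap] using (cauchyPowerSeries Fc (u:ℂ) 1).summable_norm_apply hmem'
  refine Summable.of_nonneg_of_le (fun n => abs_nonneg _) (fun n => ?_) hnorm
  rw [← hterm n]
  exact Complex.abs_re_le_norm _

theorem gaussian_hermite_expansion_1d (δ : ℝ) (hδ : 0 < δ) (x y y₀ : ℝ) :
    (Summable fun n : ℕ =>
        |(1 / (n.factorial : ℝ)) * ((y - y₀) / Real.sqrt δ) ^ n *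
          hermiteF n ((x - y₀) / Real.sqrt δ)|) ∧
    Real.exp (-(x - y) ^ 2 / δ) =
      ∑' n : ℕ, (1 / (n.factorial : ℝ)) * ((y - y₀) / Real.sqrt δ) ^ n *
        hermiteF n ((x - y₀) / Real.sqrt δ) := by
  obtain ⟨h1, h2⟩ := key ((x - y₀) / Real.sqrt δ) ((y - y₀) / Real.sqrt δ)
  refine ⟨h1, ?_⟩
  have hc0 : (0:ℝ) < Real.sqrt δ := Real.sqrt_pos.mpr hδ
  have heq : (x - y₀) / Real.sqrt δ - (y - y₀) / Real.sqrt δ = (x - y) / Real.sqrt δ := by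
    field_simp
    ring
  have heq2 : -((x - y) / Real.sqrt δ) ^ 2 = -(x - y) ^ 2 / δ := by
    rw [div_pow, Real.sq_sqrt hδ.le]; ring
  rw [heq, heq2] at h2
  exact h2.tsum_eq.symm
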